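/- Let m, p be natural numbers, Q₁ a real m×m matrix, Q₂ a real m×p matrix, and Q₄ a real p×p matrix with Q₄ᵀ = Q₄ and Q₄ invertible. Let i ∈ Fin p and set w := e_i ∈ ℝ^p. Define Q_red(τ) := Q₁ - Q₂ * (Q₄ + τ • (w wᵀ))⁻¹ * Q₂ᵀ and Q_ac := -(Q₂ * Q₄⁻¹). Suppose λ : ℝ → ℝ and u : ℝ → ℝ^m are differentiable at 0, and for all τ in some neighborhood of 0 the eigen-equation Q_red(τ) *ᵥ u(τ) = λ(τ) • u(τ) holds. Let v ∈ ℝ^m satisfy vᵀ * Q_red(0) = λ(0) • vᵀ and v ⬝ᵥ u(0) = 1. Then λ'(0) = (v ⬝ᵥ (Q_ac *ᵥ e_i)) * ((Q_ac *ᵥ e_i) ⬝ᵥ u(0)); i.e. the sensitivity of the eigenvalue of the Kron-reduced matrix to a perturbation of the self-loop of interior node i (the susceptance between interior node i and the infinite bus) equals v₁ᵀ Q_ac e_i e_iᵀ Q_acᵀ u₁. -/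

import Mathlib

open Matrix

attribute [local instance] Matrix.linftyOpNormedAddCommGroup Matrix.linftyOpNormedSpace
  Matrix.linftyOpNormedRing Matrix.linftyOpNormedAlgebra

/-- Derivative of a linearly-perturbed matrix inverse at `0`. -/
lemma hasDerivAt_matrix_inv {p : ℕ} (Q W : Matrix (Fin p) (Fin p) ℝ) (h : IsUnit Q.det) :
    HasDerivAt (fun τ : ℝ => (Q + τ • W)⁻¹) (-(Q⁻¹ * W * Q⁻¹)) 0 := by
  have hQ : IsUnit Q := (Matrix.isUnit_iff_isUnit_det Q).mpr h
  have h1 : HasDerivAt (fun τ : ℝ => Q + τ • W) W 0 := by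
    have := ((hasDerivAt_id (0 : ℝ)).smul_const W).const_add Q
    rw [one_smul] at this
    exact this
  have h2 := hasFDerivAt_ringInverse (𝕜 := ℝ) hQ.unit
  rw [hQ.unit_spec] at h2
  have h2' : HasFDerivAt (Ring.inverse : Matrix (Fin p) (Fin p) ℝ → Matrix (Fin p) (Fin p) ℝ)
      (-ContinuousLinearMap.mulLeftRight ℝ (Matrix (Fin p) (Fin p) ℝ) ↑hQ.unit⁻¹ ↑hQ.unit⁻¹)
      (Q + (0 : ℝ) • W) := by simpa using h2
  have h3 : HasDerivAt (fun τ : ℝ => Ring.inverse (Q + τ • W))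
      ((-ContinuousLinearMap.mulLeftRight ℝ (Matrix (Fin p) (Fin p) ℝ)
        ↑hQ.unit⁻¹ ↑hQ.unit⁻¹) W) 0 := by
    exact h2'.comp_hasDerivAt 0 h1
  have hco : (↑hQ.unit⁻¹ : Matrix (Fin p) (Fin p) ℝ) = Q⁻¹ := by
    rw [Matrix.coe_units_inv, hQ.unit_spec]
  simp only [ContinuousLinearMap.neg_apply, ContinuousLinearMap.mulLeftRight_apply, hco] at h3
  have heq : (fun τ : ℝ => Ring.inverse (Q + τ • W)) = fun τ : ℝ => (Q + τ • W)⁻¹ := by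
    funext τ; rw [Matrix.nonsing_inv_eq_ringInverse]
  rw [heq] at h3
  simpa [mul_assoc] using h3

/-- Derivative of a dot product. -/
lemma HasDerivAt.dotProd {n : ℕ} {f g : ℝ → (Fin n → ℝ)} {f' g' : Fin n → ℝ} {t : ℝ}
    (hf : HasDerivAt f f' t) (hg : HasDerivAt g g' t) :
    HasDerivAt (fun τ => f τ ⬝ᵥ g τ) (f' ⬝ᵥ g t + f t ⬝ᵥ g') t := by
  have hsum : HasDerivAt (fun τ => ∑ i, f τ i * g τ i)
      (∑ i, (f' i * g t i + f t i * g' i)) t := by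
    refine HasDerivAt.fun_sum fun i _ => ?_
    have hfi : HasDerivAt (fun τ => f τ i) (f' i) t := by
      simpa [Function.comp_def] using
        (ContinuousLinearMap.proj (R := ℝ) (φ := fun _ : Fin n => ℝ)
          i).hasFDerivAt.comp_hasDerivAt t hf
    have hgi : HasDerivAt (fun τ => g τ i) (g' i) t := by
      simpa [Function.comp_def] using
        (ContinuousLinearMap.proj (R := ℝ) (φ := fun _ : Fin n => ℝ)
          i).hasFDerivAt.comp_hasDerivAt t hg
    exact hfi.mul hgi
  simpa [dotProduct, Finset.sum_add_distrib] using hsum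

/-- `mulVec` by a fixed matrix, as a continuous linear map. -/
noncomputable def mvCLM {m n : ℕ} (A : Matrix (Fin m) (Fin n) ℝ) :
    (Fin n → ℝ) →L[ℝ] (Fin m → ℝ) :=
  LinearMap.toContinuousLinearMap A.mulVecLin

/-- `vecMul` by a fixed vector, as a continuous linear map in the matrix. -/
noncomputable def vmCLM {p : ℕ} (a : Fin p → ℝ) :
    Matrix (Fin p) (Fin p) ℝ →L[ℝ] (Fin p → ℝ) :=
  LinearMap.toContinuousLinearMap
    { toFun := fun N => a ᵥ* N
      map_add' := fun A B => by
        funext k; simp [Matrix.vecMul, dotProduct, Finset.sum_add_distrib, mul_add]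
      map_smul' := fun c A => by
        funext k; simp [Matrix.vecMul, dotProduct, Finset.mul_sum, mul_left_comm] }

lemma vecMul_vecMulVec' {p : ℕ} (y w : Fin p → ℝ) :
    y ᵥ* vecMulVec w w = (y ⬝ᵥ w) • w := by
  funext k
  simp [Matrix.vecMul, vecMulVec_apply, dotProduct, Finset.sum_mul, mul_assoc]

lemma dot_triple {m p : ℕ} (v : Fin m → ℝ) (Q2 : Matrix (Fin m) (Fin p) ℝ)
    (N : Matrix (Fin p) (Fin p) ℝ) (x : Fin m → ℝ) :
    v ⬝ᵥ ((Q2 * N * Q2ᵀ) *ᵥ x) = ((v ᵥ* Q2) ᵥ* N) ⬝ᵥ (Q2ᵀ *ᵥ x) := by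
  rw [Matrix.dotProduct_mulVec, Matrix.dotProduct_mulVec, Matrix.vecMul_vecMul,
    Matrix.vecMul_vecMul, Matrix.mul_assoc]

/-- Extension of Lemma 1 to a perturbation between an interior node `i` and the infinite
bus (the self-loop of interior node `i`, so `w = e_i`):
`λ'(0) = v₁ᵀ Q_ac e_i e_iᵀ Q_acᵀ u₁`. -/
theorem lemma1_selfloop_sensitivity {m p : ℕ}
    (Q1 : Matrix (Fin m) (Fin m) ℝ) (Q2 : Matrix (Fin m) (Fin p) ℝ)
    (Q4 : Matrix (Fin p) (Fin p) ℝ) (hQ4sym : Q4ᵀ = Q4) (hQ4 : IsUnit Q4.det)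
    (i : Fin p)
    (w : Fin p → ℝ) (hw : w = Pi.single i 1)
    (Qred : ℝ → Matrix (Fin m) (Fin m) ℝ)
    (hQred : ∀ τ : ℝ, Qred τ = Q1 - Q2 * (Q4 + τ • vecMulVec w w)⁻¹ * Q2ᵀ)
    (Qac : Matrix (Fin m) (Fin p) ℝ) (hQac : Qac = -(Q2 * Q4⁻¹))
    (lam : ℝ → ℝ) (u : ℝ → (Fin m → ℝ))
    (hlam : DifferentiableAt ℝ lam 0) (hu : DifferentiableAt ℝ u 0)
    (heig : ∀ᶠ τ : ℝ in nhds 0, Qred τ *ᵥ u τ = lam τ • u τ)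
    (v : Fin m → ℝ)
    (hv : v ᵥ* Qred 0 = lam 0 • v)
    (hnorm : v ⬝ᵥ u 0 = 1) :
    deriv lam 0 = (v ⬝ᵥ (Qac *ᵥ Pi.single i 1)) * ((Qac *ᵥ Pi.single i 1) ⬝ᵥ u 0) := by
  rw [← hw]
  have hu' : HasDerivAt u (deriv u 0) 0 := hu.hasDerivAt
  have hlam' : HasDerivAt lam (deriv lam 0) 0 := hlam.hasDerivAt
  -- derivative of the inverse
  have hNinv : HasDerivAt (fun τ : ℝ => (Q4 + τ • vecMulVec w w)⁻¹)
      (-(Q4⁻¹ * vecMulVec w w * Q4⁻¹)) 0 :=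
    hasDerivAt_matrix_inv Q4 (vecMulVec w w) hQ4
  -- the scalar function φ
  set φ : ℝ → ℝ := fun τ =>
    v ⬝ᵥ (Q1 *ᵥ u τ) - ((v ᵥ* Q2) ᵥ* (Q4 + τ • vecMulVec w w)⁻¹) ⬝ᵥ (Q2ᵀ *ᵥ u τ) with hφ
  have hφeq : ∀ τ : ℝ, φ τ = v ⬝ᵥ (Qred τ *ᵥ u τ) := by
    intro τ
    rw [hQred τ, hφ]
    simp only [Matrix.sub_mulVec, dotProduct_sub, dot_triple]
  -- φ agrees with ψ near 0
  have hfeq : φ =ᶠ[nhds 0] fun τ => lam τ * (v ⬝ᵥ u τ) := by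
    filter_upwards [heig] with τ hτ
    rw [hφeq τ, hτ, dotProduct_smul, smul_eq_mul]
  -- derivatives of the pieces
  have hg1 : HasDerivAt (fun τ => Q1 *ᵥ u τ) (Q1 *ᵥ deriv u 0) 0 := by
    simpa only [mvCLM, LinearMap.coe_toContinuousLinearMap', Matrix.mulVecLin_apply,
      Function.comp_def] using (mvCLM Q1).hasFDerivAt.comp_hasDerivAt 0 hu'
  have hg3 : HasDerivAt (fun τ => Q2ᵀ *ᵥ u τ) (Q2ᵀ *ᵥ deriv u 0) 0 := by
    simpa only [mvCLM, LinearMap.coe_toContinuousLinearMap', Matrix.mulVecLin_apply,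
      Function.comp_def] using (mvCLM Q2ᵀ).hasFDerivAt.comp_hasDerivAt 0 hu'
  have hg2 : HasDerivAt (fun τ : ℝ => (v ᵥ* Q2) ᵥ* (Q4 + τ • vecMulVec w w)⁻¹)
      ((v ᵥ* Q2) ᵥ* -(Q4⁻¹ * vecMulVec w w * Q4⁻¹)) 0 := by
    exact
      (vmCLM (v ᵥ* Q2)).hasFDerivAt.comp_hasDerivAt 0 hNinv
  have hφd : HasDerivAt φ
      ((0 ⬝ᵥ (Q1 *ᵥ u 0) + v ⬝ᵥ (Q1 *ᵥ deriv u 0)) -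
        (((v ᵥ* Q2) ᵥ* -(Q4⁻¹ * vecMulVec w w * Q4⁻¹)) ⬝ᵥ (Q2ᵀ *ᵥ u 0) +
          ((v ᵥ* Q2) ᵥ* (Q4 + (0:ℝ) • vecMulVec w w)⁻¹) ⬝ᵥ (Q2ᵀ *ᵥ deriv u 0))) 0 :=
    ((hasDerivAt_const 0 v).dotProd hg1).sub (hg2.dotProd hg3)
  have hψd : HasDerivAt (fun τ => lam τ * (v ⬝ᵥ u τ))
      (deriv lam 0 * (v ⬝ᵥ u 0) + lam 0 * (0 ⬝ᵥ u 0 + v ⬝ᵥ deriv u 0)) 0 :=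
    hlam'.mul ((hasDerivAt_const 0 v).dotProd hu')
  have hderiv_eq : deriv φ 0 = deriv (fun τ => lam τ * (v ⬝ᵥ u τ)) 0 := hfeq.deriv_eq
  rw [hφd.deriv, hψd.deriv] at hderiv_eq
  simp only [zero_dotProduct, zero_add, hnorm, mul_one, zero_smul, add_zero,
    Matrix.vecMul_neg, neg_dotProduct, sub_neg_eq_add] at hderiv_eq
  -- the non-perturbation part equals lam 0 * (v ⬝ᵥ u')
  have hmain : v ⬝ᵥ (Q1 *ᵥ deriv u 0) - ((v ᵥ* Q2) ᵥ* Q4⁻¹) ⬝ᵥ (Q2ᵀ *ᵥ deriv u 0)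
      = lam 0 * (v ⬝ᵥ deriv u 0) := by
    have h2 : v ⬝ᵥ (Qred 0 *ᵥ deriv u 0) = lam 0 * (v ⬝ᵥ deriv u 0) := by
      rw [Matrix.dotProduct_mulVec, hv, smul_dotProduct, smul_eq_mul]
    rw [← h2, hQred 0]
    simp only [zero_smul, add_zero, Matrix.sub_mulVec, dotProduct_sub, dot_triple]
  -- isolate deriv lam 0
  have hlamval : deriv lam 0
      = ((v ᵥ* Q2) ᵥ* (Q4⁻¹ * vecMulVec w w * Q4⁻¹)) ⬝ᵥ (Q2ᵀ *ᵥ u 0) := by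
    linarith [hmain, hderiv_eq]
  rw [hlamval]
  -- final algebra
  have hq4invsym : Q4⁻¹ᵀ = Q4⁻¹ := by rw [Matrix.transpose_nonsing_inv, hQ4sym]
  have hQacw : Qac *ᵥ w = -((Q2 * Q4⁻¹) *ᵥ w) := by rw [hQac, Matrix.neg_mulVec]
  have hL : ((v ᵥ* Q2) ᵥ* (Q4⁻¹ * vecMulVec w w * Q4⁻¹)) ⬝ᵥ (Q2ᵀ *ᵥ u 0)
      = (((v ᵥ* Q2) ᵥ* Q4⁻¹) ⬝ᵥ w) * (w ⬝ᵥ (Q4⁻¹ *ᵥ (Q2ᵀ *ᵥ u 0))) := by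
    rw [← Matrix.vecMul_vecMul, ← Matrix.vecMul_vecMul, vecMul_vecMulVec',
      Matrix.smul_vecMul, smul_dotProduct, smul_eq_mul, ← Matrix.dotProduct_mulVec,
      Matrix.dotProduct_mulVec w Q4⁻¹ (Q2ᵀ *ᵥ u 0)]
  have hR1 : v ⬝ᵥ (Qac *ᵥ w) = -(((v ᵥ* Q2) ᵥ* Q4⁻¹) ⬝ᵥ w) := by
    rw [hQacw, dotProduct_neg, Matrix.dotProduct_mulVec, ← Matrix.vecMul_vecMul]
  have hR2 : (Qac *ᵥ w) ⬝ᵥ u 0 = -(w ⬝ᵥ (Q4⁻¹ *ᵥ (Q2ᵀ *ᵥ u 0))) := by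
    rw [hQacw, neg_dotProduct]
    congr 1
    rw [dotProduct_comm ((Q2 * Q4⁻¹) *ᵥ w) (u 0), Matrix.dotProduct_mulVec,
      dotProduct_comm (u 0 ᵥ* (Q2 * Q4⁻¹)) w, ← Matrix.mulVec_transpose,
      Matrix.transpose_mul, hq4invsym, ← Matrix.mulVec_mulVec]
  rw [hL, hR1, hR2]
  ring
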